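/- arXiv:1110.3692 — 3 statements merged into one kernel-verified Lean document; each statement's English description precedes it below -/
import Mathlib

section
/- The convolution algebra of compactly supported finite complex Borel measures on ℝ has no zero divisors: if μ, ν are compactly supported finite complex measures on ℝ with μ * ν = 0, then μ = 0 or ν = 0. -/
open MeasureTheory

open Complex
lemma integ_aux {ρ : Measure ℝ} [IsFiniteMeasure ρ] {R : ℝ}
    (hsupp : ∀ᵐ x ∂ρ, |x| ≤ R) {f : ℝ → ℂ} (hf : Continuous f) {C : ℝ}
    (hC : ∀ x : ℝ, |x| ≤ R → ‖f x‖ ≤ C) : Integrable f ρ := by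
  refine Integrable.mono' (integrable_const C) hf.aestronglyMeasurable ?_
  filter_upwards [hsupp] with x hx using hC x hx

lemma hasDerivAt_M {ρ : Measure ℝ} [IsFiniteMeasure ρ] {R : ℝ} (hR : 0 ≤ R)
    (hsupp : ∀ᵐ x ∂ρ, |x| ≤ R) (k : ℕ) (z : ℂ) :
    HasDerivAt (fun w : ℂ => ∫ x : ℝ, (x:ℂ)^k * Complex.exp (w * x) ∂ρ)
      (∫ x : ℝ, (x:ℂ)^(k+1) * Complex.exp (z * x) ∂ρ) z := by
  have key : ∀ (w : ℂ) (x : ℝ), w ∈ Metric.ball z 1 → |x| ≤ R →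
      ∀ j : ℕ, ‖(x:ℂ)^j * Complex.exp (w * x)‖ ≤ R^j * Real.exp ((‖z‖+1) * R) := by
    intro w x hw hx j
    simp only [norm_mul, norm_pow, Complex.norm_exp]
    have h1 : ‖(x:ℂ)‖ ≤ R := by rwa [Complex.norm_real, Real.norm_eq_abs]
    have h2 : (w * x).re ≤ (‖z‖+1) * R := by
      have : (w * (x:ℂ)).re = w.re * x := by simp
      rw [this]
      calc w.re * x ≤ |w.re * x| := le_abs_self _
        _ = |w.re| * |x| := abs_mul _ _
        _ ≤ (‖z‖+1) * R := by
          apply mul_le_mul _ hx (abs_nonneg x) (by positivity)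
          calc |w.re| ≤ ‖w‖ := Complex.abs_re_le_norm w
            _ ≤ ‖z‖ + 1 := by
              have h := mem_ball_iff_norm.mp hw
              have h2 : ‖w‖ ≤ ‖z‖ + ‖w - z‖ := by
                simpa using norm_add_le z (w - z)
              linarith
    exact mul_le_mul (pow_le_pow_left₀ (norm_nonneg _) h1 _)
      (Real.exp_le_exp.2 h2) (Real.exp_nonneg _) (by positivity)
  have cont : ∀ (j : ℕ) (w : ℂ), Continuous fun x : ℝ => (x:ℂ)^j * Complex.exp (w * x) := by
    intro j w
    exact (continuous_ofReal.pow j).mul (Complex.continuous_exp.comp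
      (continuous_const.mul continuous_ofReal))
  have := hasDerivAt_integral_of_dominated_loc_of_deriv_le (μ := ρ)
    (F := fun w x => (x:ℂ)^k * Complex.exp (w * x))
    (F' := fun w x => (x:ℂ)^(k+1) * Complex.exp (w * x))
    (bound := fun _ => R^(k+1) * Real.exp ((‖z‖+1) * R)) (x₀ := z) (Metric.ball_mem_nhds z one_pos)
    (Filter.Eventually.of_forall fun w => ((cont k w).aestronglyMeasurable))
    ?_ ((cont (k+1) z).aestronglyMeasurable) ?_ (integrable_const _) ?_
  · exact this.2
  · -- Integrable (F z)
    exact integ_aux hsupp (cont k z) (C := R^k * Real.exp ((‖z‖+1) * R))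
      (fun x hx => key z x (Metric.mem_ball_self one_pos) hx k)
  · -- bound
    filter_upwards [hsupp] with x hx w hw using key w x hw hx (k+1)
  · -- h_diff
    filter_upwards [hsupp] with x _ w _
    have : HasDerivAt (fun w : ℂ => Complex.exp (w * x)) ((x:ℂ) * Complex.exp (w * x)) w := by
      simpa [mul_comm] using ((hasDerivAt_id w).mul_const (x:ℂ)).cexp
    simpa [pow_succ, mul_assoc, mul_comm, mul_left_comm] using this.const_mul ((x:ℂ)^k)

-- jordan part vanishing on null-for-s sets
lemma jordan_null {α : Type*} [MeasurableSpace α] (s : SignedMeasure α) {A : Set α}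
    (hA : MeasurableSet A) (h : ∀ B : Set α, MeasurableSet B → B ⊆ A → s B = 0) :
    s.toJordanDecomposition.posPart A = 0 ∧ s.toJordanDecomposition.negPart A = 0 := by
  obtain ⟨i, hi₁, hi₂, hi₃, hp, hn⟩ := s.toJordanDecomposition_spec
  constructor
  · rw [hp, SignedMeasure.toMeasureOfZeroLE_apply _ hi₂ hi₁ hA]
    simp [h (i ∩ A) (hi₁.inter hA) Set.inter_subset_right]
  · rw [hn, SignedMeasure.toMeasureOfLEZero_apply _ hi₃ hi₁.compl hA]
    simp [h (iᶜ ∩ A) (hi₁.compl.inter hA) Set.inter_subset_right]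

-- a.e. bound for the four parts
lemma ae_bound_of_supp {μ : ComplexMeasure ℝ} {K : Set ℝ}
    (hK : ∀ A : Set ℝ, MeasurableSet A → A ∩ K = ∅ → μ A = 0) {R : ℝ}
    (hKR : K ⊆ Set.Icc (-R) R) :
    (∀ᵐ x ∂(ComplexMeasure.re μ).toJordanDecomposition.posPart, |x| ≤ R) ∧
    (∀ᵐ x ∂(ComplexMeasure.re μ).toJordanDecomposition.negPart, |x| ≤ R) ∧
    (∀ᵐ x ∂(ComplexMeasure.im μ).toJordanDecomposition.posPart, |x| ≤ R) ∧
    (∀ᵐ x ∂(ComplexMeasure.im μ).toJordanDecomposition.negPart, |x| ≤ R) := by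
  have hA : MeasurableSet {x : ℝ | ¬ |x| ≤ R} := by
    have : {x : ℝ | ¬ |x| ≤ R} = (fun x : ℝ => |x|) ⁻¹' (Set.Iic R)ᶜ := by
      ext x; simp
    rw [this]
    exact (measurable_abs) measurableSet_Iic.compl
  have hdisj : {x : ℝ | ¬ |x| ≤ R} ∩ K = ∅ := by
    ext x
    simp only [Set.mem_inter_iff, Set.mem_setOf_eq, Set.mem_empty_iff_false, iff_false, not_and]
    intro hx hxK
    exact hx (abs_le.mpr ⟨(hKR hxK).1, (hKR hxK).2⟩)
  have hre : ∀ B : Set ℝ, MeasurableSet B → B ⊆ {x : ℝ | ¬ |x| ≤ R} → (ComplexMeasure.re μ) B = 0 := by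
    intro B hB hBA
    have : μ B = 0 := hK B hB (Set.eq_empty_of_subset_empty
      (le_trans (Set.inter_subset_inter_left _ hBA) hdisj.le))
    show (μ B).re = 0; rw [this]; rfl
  have him : ∀ B : Set ℝ, MeasurableSet B → B ⊆ {x : ℝ | ¬ |x| ≤ R} → (ComplexMeasure.im μ) B = 0 := by
    intro B hB hBA
    have : μ B = 0 := hK B hB (Set.eq_empty_of_subset_empty
      (le_trans (Set.inter_subset_inter_left _ hBA) hdisj.le))
    show (μ B).im = 0; rw [this]; rfl
  obtain ⟨h1, h2⟩ := jordan_null (ComplexMeasure.re μ) hA hre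
  obtain ⟨h3, h4⟩ := jordan_null (ComplexMeasure.im μ) hA him
  exact ⟨ae_iff.mpr h1, ae_iff.mpr h2, ae_iff.mpr h3, ae_iff.mpr h4⟩

/-- Integral of a complex-valued function against a complex measure, via the Jordan
decompositions of the real and imaginary parts. -/
noncomputable def cintegral {α : Type*} [MeasurableSpace α] (μ : ComplexMeasure α)
    (f : α → ℂ) : ℂ :=
  ((∫ x, f x ∂(ComplexMeasure.re μ).toJordanDecomposition.posPart) -
      ∫ x, f x ∂(ComplexMeasure.re μ).toJordanDecomposition.negPart) +
    Complex.I * ((∫ x, f x ∂(ComplexMeasure.im μ).toJordanDecomposition.posPart) -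
      ∫ x, f x ∂(ComplexMeasure.im μ).toJordanDecomposition.negPart)

lemma cintegral_zero {α : Type*} [MeasurableSpace α] (f : α → ℂ) :
    cintegral (0 : ComplexMeasure α) f = 0 := by
  have hre : ComplexMeasure.re (0 : ComplexMeasure α) = 0 := map_zero _
  have him : ComplexMeasure.im (0 : ComplexMeasure α) = 0 := map_zero _
  simp [cintegral, hre, him, SignedMeasure.toJordanDecomposition_zero]

lemma cintegral_const_mul {α : Type*} [MeasurableSpace α] (μ : ComplexMeasure α)
    (c : ℂ) (f : α → ℂ) :
    cintegral μ (fun x => c * f x) = c * cintegral μ f := by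
  simp only [cintegral, integral_const_mul]
  ring

/-- transform: `T μ k z = cintegral μ (x^k e^{zx})`. -/
noncomputable def Tr (μ : ComplexMeasure ℝ) (k : ℕ) (z : ℂ) : ℂ :=
  cintegral μ (fun x : ℝ => (x:ℂ)^k * Complex.exp (z * x))

lemma hasDerivAt_Tr {μ : ComplexMeasure ℝ} {R : ℝ} (hR : 0 ≤ R)
    (h1 : ∀ᵐ x ∂(ComplexMeasure.re μ).toJordanDecomposition.posPart, |x| ≤ R)
    (h2 : ∀ᵐ x ∂(ComplexMeasure.re μ).toJordanDecomposition.negPart, |x| ≤ R)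
    (h3 : ∀ᵐ x ∂(ComplexMeasure.im μ).toJordanDecomposition.posPart, |x| ≤ R)
    (h4 : ∀ᵐ x ∂(ComplexMeasure.im μ).toJordanDecomposition.negPart, |x| ≤ R)
    (k : ℕ) (z : ℂ) :
    HasDerivAt (Tr μ k) (Tr μ (k+1) z) z := by
  have d1 := hasDerivAt_M hR h1 k z
  have d2 := hasDerivAt_M hR h2 k z
  have d3 := hasDerivAt_M hR h3 k z
  have d4 := hasDerivAt_M hR h4 k z
  have := ((d1.sub d2).add ((d3.sub d4).const_mul Complex.I))
  convert this using 1 <;> rfl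

lemma entire_dichotomy {F G : ℂ → ℂ} (hF : Differentiable ℂ F) (hG : Differentiable ℂ G)
    (h : ∀ z, F z * G z = 0) : (∀ z, F z = 0) ∨ (∀ z, G z = 0) := by
  by_cases hF0 : ∀ z, F z = 0
  · exact Or.inl hF0
  push_neg at hF0
  obtain ⟨a, ha⟩ := hF0
  right
  have hGa : G =ᶠ[nhds a] 0 := by
    have : ∀ᶠ z in nhds a, F z ≠ 0 :=
      (hF.continuous.continuousAt).eventually_ne ha
    filter_upwards [this] with z hz
    have := h z
    rcases mul_eq_zero.mp this with h' | h'
    · exact absurd h' hz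
    · exact h'
  have hGan : AnalyticOnNhd ℂ G Set.univ :=
    hG.differentiableOn.analyticOnNhd isOpen_univ
  intro z
  exact hGan.eqOn_zero_of_preconnected_of_eventuallyEq_zero isPreconnected_univ
    (Set.mem_univ a) hGa (Set.mem_univ z)

lemma cont_integrable {ρ : Measure ℝ} [IsFiniteMeasure ρ] {R : ℝ}
    (hsupp : ∀ᵐ x ∂ρ, |x| ≤ R) {f : ℝ → ℝ} (hf : Continuous f) : Integrable f ρ := by
  obtain ⟨C, hC⟩ := (isCompact_Icc (a := -R) (b := R)).exists_bound_of_continuousOn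
    hf.continuousOn
  refine Integrable.mono' (integrable_const C) hf.aestronglyMeasurable ?_
  filter_upwards [hsupp] with x hx
  exact hC x (abs_le.mp hx |> fun h => Set.mem_Icc.mpr h)

lemma moments_eq_measure_eq {p n : Measure ℝ} [IsFiniteMeasure p] [IsFiniteMeasure n] {R : ℝ}
    (hp : ∀ᵐ x ∂p, |x| ≤ R) (hn : ∀ᵐ x ∂n, |x| ≤ R)
    (hmom : ∀ k : ℕ, ∫ x, x^k ∂p = ∫ x, x^k ∂n) : p = n := by
  -- polynomials
  have hpoly : ∀ P : Polynomial ℝ, ∫ x, P.eval x ∂p = ∫ x, P.eval x ∂n := by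
    intro P
    induction P using Polynomial.induction_on' with
    | add f g hf hg =>
      simp only [Polynomial.eval_add]
      rw [integral_add, integral_add]
      · rw [hf, hg]
      · exact cont_integrable hn f.continuous_aeval
      · exact cont_integrable hn g.continuous_aeval
      · exact cont_integrable hp f.continuous_aeval
      · exact cont_integrable hp g.continuous_aeval
    | monomial k a =>
      simp only [Polynomial.eval_monomial]
      rw [integral_const_mul, integral_const_mul, hmom k]
  -- continuous functions
  have hcont : ∀ f : ℝ → ℝ, Continuous f → ∫ x, f x ∂p = ∫ x, f x ∂n := by
    intro f hf
    have key : ∀ ε : ℝ, 0 < ε → |∫ x, f x ∂p - ∫ x, f x ∂n| ≤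
        ε * ((p Set.univ).toReal + (n Set.univ).toReal) := by
      intro ε hε
      -- Weierstrass approximation on Icc (-R) R
      have := polynomialFunctions_closure_eq_top (-R) R
      have hmem : (ContinuousMap.mk f hf).restrict (Set.Icc (-R) R) ∈
          (polynomialFunctions (Set.Icc (-R) R)).topologicalClosure := by
        rw [this]; trivial
      have hmem' : (ContinuousMap.mk f hf).restrict (Set.Icc (-R) R) ∈
          closure ((polynomialFunctions (Set.Icc (-R) R)) : Set C(Set.Icc (-R) R, ℝ)) := hmem
      obtain ⟨g, hg, hdist⟩ := Metric.mem_closure_iff.mp hmem' ε hε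
      rw [polynomialFunctions_coe] at hg
      obtain ⟨P, rfl⟩ := hg
      -- the approximation: ∀ x ∈ Icc, |f x - P.eval x| ≤ ε
      have happrox : ∀ x : ℝ, x ∈ Set.Icc (-R) R → |f x - P.eval x| ≤ ε := by
        intro x hx
        have := ContinuousMap.dist_apply_le_dist (f := (ContinuousMap.mk f hf).restrict
          (Set.Icc (-R) R)) (g := Polynomial.toContinuousMapOnAlgHom _ P) ⟨x, hx⟩
        have h2 : dist (f x) (P.eval x) ≤ dist ((ContinuousMap.mk f hf).restrict
            (Set.Icc (-R) R)) (Polynomial.toContinuousMapOnAlgHom _ P) := le_of_eq_of_le rfl this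
        rw [Real.dist_eq] at h2
        linarith [hdist]
      -- bound each difference integral
      have key2 : ∀ (ρ : Measure ℝ) [IsFiniteMeasure ρ], (∀ᵐ x ∂ρ, |x| ≤ R) →
          ‖∫ x, (f x - P.eval x) ∂ρ‖ ≤ ε * (ρ Set.univ).toReal := by
        intro ρ _ hρ
        have : ∀ᵐ x ∂ρ, ‖f x - P.eval x‖ ≤ ε := by
          filter_upwards [hρ] with x hx
          exact happrox x (Set.mem_Icc.mpr (abs_le.mp hx))
        exact norm_integral_le_of_norm_le_const this
      have hint : ∀ (ρ : Measure ℝ) [IsFiniteMeasure ρ], (∀ᵐ x ∂ρ, |x| ≤ R) →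
          ∫ x, (f x - P.eval x) ∂ρ = ∫ x, f x ∂ρ - ∫ x, P.eval x ∂ρ := by
        intro ρ _ hρ
        exact integral_sub (cont_integrable hρ hf) (cont_integrable hρ P.continuous_aeval)
      have e1 := key2 p hp
      have e2 := key2 n hn
      rw [hint p hp] at e1
      rw [hint n hn] at e2
      rw [Real.norm_eq_abs] at e1 e2
      have : ∫ x, f x ∂p - ∫ x, f x ∂n =
          (∫ x, f x ∂p - ∫ x, P.eval x ∂p) - (∫ x, f x ∂n - ∫ x, P.eval x ∂n) := by
        rw [hpoly P]; ring
      rw [this]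
      calc |(∫ x, f x ∂p - ∫ x, P.eval x ∂p) - (∫ x, f x ∂n - ∫ x, P.eval x ∂n)|
          ≤ |∫ x, f x ∂p - ∫ x, P.eval x ∂p| + |∫ x, f x ∂n - ∫ x, P.eval x ∂n| := abs_sub _ _
        _ ≤ ε * (p Set.univ).toReal + ε * (n Set.univ).toReal := add_le_add e1 e2
        _ = ε * ((p Set.univ).toReal + (n Set.univ).toReal) := by ring
    by_contra hne
    have h0 : 0 < |∫ x, f x ∂p - ∫ x, f x ∂n| := by
      rcases abs_pos.mpr (sub_ne_zero.mpr hne) with h; exact h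
    set D := (p Set.univ).toReal + (n Set.univ).toReal with hD
    have hD0 : 0 ≤ D := by positivity
    have := key (|∫ x, f x ∂p - ∫ x, f x ∂n| / (2 * (D + 1))) (by positivity)
    have hlt : |∫ x, f x ∂p - ∫ x, f x ∂n| / (2 * (D + 1)) * D <
        |∫ x, f x ∂p - ∫ x, f x ∂n| := by
      rw [div_mul_eq_mul_div, div_lt_iff₀ (by positivity)]
      nlinarith
    linarith
  -- conclude
  refine ext_of_forall_lintegral_eq_of_IsFiniteMeasure ?_
  intro f
  have hfc : Continuous fun x => (f x : ℝ) := NNReal.continuous_coe.comp f.continuous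
  rw [lintegral_coe_eq_integral f (cont_integrable hp hfc),
    lintegral_coe_eq_integral f (cont_integrable hn hfc), hcont _ hfc]

/-- A complex measure is compactly supported if it vanishes on measurable sets disjoint
from some compact set. -/
def MeasCompactSupport {G : Type*} [TopologicalSpace G] [MeasurableSpace G]
    (μ : ComplexMeasure G) : Prop :=
  ∃ K : Set G, IsCompact K ∧ ∀ A : Set G, MeasurableSet A → A ∩ K = ∅ → μ A = 0

/-- `ρ` is the convolution of `μ` and `ν` (w.r.t. the group operation `op`):
`∫ f dρ = ∬ f (op x y) dμ(x) dν(y)` for every continuous `f`. -/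
def IsConvolution {G : Type*} [TopologicalSpace G] [MeasurableSpace G] (op : G → G → G)
    (μ ν ρ : ComplexMeasure G) : Prop :=
  ∀ f : G → ℂ, Continuous f →
    cintegral ρ f = cintegral μ (fun x => cintegral ν (fun y => f (op x y)))

-- get a good radius
lemma radius_of_compact {K : Set ℝ} (hK : IsCompact K) :
    ∃ R : ℝ, 0 ≤ R ∧ K ⊆ Set.Icc (-R) R := by
  obtain ⟨r, hr⟩ := hK.isBounded.subset_closedBall 0
  refine ⟨max r 0, le_max_right _ _, ?_⟩
  intro x hx
  have := hr hx
  rw [Metric.mem_closedBall, Real.dist_eq, sub_zero] at this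
  have h2 : |x| ≤ max r 0 := le_trans this (le_max_left _ _)
  exact Set.mem_Icc.mpr (abs_le.mp h2)

-- transform vanishing implies measure zero
lemma measure_zero_of_transform_zero {μ : ComplexMeasure ℝ}
    (hμ : MeasCompactSupport μ) (hT : ∀ z, Tr μ 0 z = 0) : μ = 0 := by
  obtain ⟨K, hKc, hK⟩ := hμ
  obtain ⟨R, hR, hKR⟩ := radius_of_compact hKc
  obtain ⟨h1, h2, h3, h4⟩ := ae_bound_of_supp hK hKR
  -- all Tr μ k vanish
  have hTk : ∀ k z, Tr μ k z = 0 := by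
    intro k
    induction k with
    | zero => exact hT
    | succ k ih =>
      intro z
      have hd := hasDerivAt_Tr hR h1 h2 h3 h4 k z
      have h0 : Tr μ k = fun _ => (0 : ℂ) := funext ih
      rw [h0] at hd
      exact hd.unique (hasDerivAt_const z 0)
  -- moments
  have moments : ∀ k : ℕ,
      (∫ x, x^k ∂(ComplexMeasure.re μ).toJordanDecomposition.posPart : ℝ)
        = ∫ x, x^k ∂(ComplexMeasure.re μ).toJordanDecomposition.negPart ∧
      (∫ x, x^k ∂(ComplexMeasure.im μ).toJordanDecomposition.posPart : ℝ)
        = ∫ x, x^k ∂(ComplexMeasure.im μ).toJordanDecomposition.negPart := by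
    intro k
    have := hTk k 0
    have hfun : (fun x : ℝ => (x:ℂ)^k * Complex.exp (0 * x)) = fun x : ℝ => ((x^k : ℝ) : ℂ) := by
      funext x; push_cast; simp
    rw [Tr, hfun] at this
    have hoi : ∀ ρ : Measure ℝ, (∫ x : ℝ, ((x^k : ℝ) : ℂ) ∂ρ) = ((∫ x, x^k ∂ρ : ℝ) : ℂ) :=
      fun ρ => integral_ofReal
    simp only [cintegral, hoi] at this
    rw [Complex.ext_iff] at this
    simp only [Complex.add_re, Complex.sub_re, Complex.ofReal_re, Complex.mul_re, Complex.I_re,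
      Complex.add_im, Complex.sub_im, Complex.ofReal_im, Complex.mul_im, Complex.I_im,
      Complex.zero_re, Complex.zero_im] at this
    constructor <;> [linarith [this.1]; linarith [this.2]]
  have hre : (ComplexMeasure.re μ).toJordanDecomposition.posPart
      = (ComplexMeasure.re μ).toJordanDecomposition.negPart :=
    moments_eq_measure_eq h1 h2 (fun k => (moments k).1)
  have him : (ComplexMeasure.im μ).toJordanDecomposition.posPart
      = (ComplexMeasure.im μ).toJordanDecomposition.negPart :=
    moments_eq_measure_eq h3 h4 (fun k => (moments k).2)
  have key0 : ∀ s : SignedMeasure ℝ,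
      s.toJordanDecomposition.posPart = s.toJordanDecomposition.negPart → s = 0 := by
    intro s hs
    ext i hi
    have := congrArg (fun t : SignedMeasure ℝ => t i) s.toSignedMeasure_toJordanDecomposition
    simp only [JordanDecomposition.toSignedMeasure, VectorMeasure.sub_apply] at this
    rw [Measure.toSignedMeasure_apply_measurable hi,
      Measure.toSignedMeasure_apply_measurable hi, hs, sub_self] at this
    rw [VectorMeasure.zero_apply, ← this]
  have hre0 : ComplexMeasure.re μ = 0 := key0 _ hre
  have him0 : ComplexMeasure.im μ = 0 := key0 _ him
  ext i hi
  have e1 : (ComplexMeasure.re μ) i = 0 := by rw [hre0]; rfl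
  have e2 : (ComplexMeasure.im μ) i = 0 := by rw [him0]; rfl
  rw [ComplexMeasure.re_apply] at e1
  rw [ComplexMeasure.im_apply] at e2
  rw [VectorMeasure.zero_apply]
  exact Complex.ext e1 e2

/-- The convolution algebra of compactly supported finite complex Borel measures on `ℝ`
has no zero divisors. -/
theorem no_zero_divisors_Mc_real (μ ν : ComplexMeasure ℝ)
    (hμ : MeasCompactSupport μ) (hν : MeasCompactSupport ν)
    (h : IsConvolution (· + ·) μ ν (0 : ComplexMeasure ℝ)) :
    μ = 0 ∨ ν = 0 := by
  -- product of transforms vanishes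
  have hprod : ∀ z, Tr μ 0 z * Tr ν 0 z = 0 := by
    intro z
    have hc : Continuous fun w : ℝ => Complex.exp (z * w) :=
      Complex.continuous_exp.comp (continuous_const.mul Complex.continuous_ofReal)
    have := h (fun w : ℝ => Complex.exp (z * w)) hc
    rw [cintegral_zero] at this
    have hinner : ∀ x : ℝ, (cintegral ν fun y => Complex.exp (z * (((x + y : ℝ)) : ℂ)))
        = Complex.exp (z * x) * Tr ν 0 z := by
      intro x
      have hfun : (fun y : ℝ => Complex.exp (z * (((x + y : ℝ)) : ℂ)))
          = fun y : ℝ => Complex.exp (z * x) * ((y:ℂ)^0 * Complex.exp (z * y)) := by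
        funext y
        rw [pow_zero, one_mul, ← Complex.exp_add]
        push_cast
        ring_nf
      rw [hfun, cintegral_const_mul]
      rfl
    have this' : (0:ℂ) = cintegral μ fun x : ℝ =>
        cintegral ν fun y : ℝ => Complex.exp (z * (((x + y : ℝ)) : ℂ)) := this
    have hfun2 : (fun x : ℝ => cintegral ν fun y => Complex.exp (z * (((x + y : ℝ)) : ℂ)))
        = fun x : ℝ => Tr ν 0 z * ((x:ℂ)^0 * Complex.exp (z * x)) := by
      funext x; rw [hinner x]; ring
    rw [hfun2, cintegral_const_mul] at this'
    have h3 : Tr ν 0 z * Tr μ 0 z = 0 := this'.symm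
    linear_combination h3
  obtain ⟨K₁, hK₁c, hK₁⟩ := hμ
  obtain ⟨R₁, hR₁, hKR₁⟩ := radius_of_compact hK₁c
  obtain ⟨a1, a2, a3, a4⟩ := ae_bound_of_supp hK₁ hKR₁
  obtain ⟨K₂, hK₂c, hK₂⟩ := hν
  obtain ⟨R₂, hR₂, hKR₂⟩ := radius_of_compact hK₂c
  obtain ⟨b1, b2, b3, b4⟩ := ae_bound_of_supp hK₂ hKR₂
  have hdμ : Differentiable ℂ (Tr μ 0) :=
    fun z => (hasDerivAt_Tr hR₁ a1 a2 a3 a4 0 z).differentiableAt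
  have hdν : Differentiable ℂ (Tr ν 0) :=
    fun z => (hasDerivAt_Tr hR₂ b1 b2 b3 b4 0 z).differentiableAt
  rcases entire_dichotomy hdμ hdν hprod with hz | hz
  · exact Or.inl (measure_zero_of_transform_zero ⟨K₁, hK₁c, hK₁⟩ hz)
  · exact Or.inr (measure_zero_of_transform_zero ⟨K₂, hK₂c, hK₂⟩ hz)
end

section
/- Let 1 → A → G → Q → 1 be an extension of Lie groups with A ≅ ℝ a closed central-series-type normal subgroup identified with ℝ, and q : G → Q the quotient map. Define γ₊(f)(x) = ∫_A f(xa⁻¹) 𝟙_{[0,∞)}(a) da and γ₋(f)(x) = ∫_A f(xa⁻¹) 𝟙_{(−∞,0]}(a) da for f ∈ C_c(G). If f ∈ C_c(G) satisfies q₊f = 0 (i.e., ∫_A f(xa) da = 0 for all x ∈ G), then γ₊(f) and γ₋(f) are compactly supported continuous functions on G. -/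
open MeasureTheory Set Filter Topology Pointwise

theorem aux_unif {G : Type*} [TopologicalSpace G] [Group G] [IsTopologicalGroup G]
    (f : G → ℂ) (hf : Continuous f) (hfc : HasCompactSupport f) {ε : ℝ} (hε : 0 < ε) :
    ∃ U ∈ 𝓝 (1 : G), ∀ a ∈ U, ∀ g : G, ‖f (a * g) - f g‖ ≤ ε := by
  have hUV : ∀ g : G, ∃ U ∈ 𝓝 (1:G), ∃ V ∈ 𝓝 g, ∀ a ∈ U, ∀ b ∈ V,
      ‖f (a * b) - f g‖ ≤ ε/2 := by
    intro g
    have hc : ContinuousAt (fun p : G × G => f (p.1 * p.2)) (1, g) :=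
      (hf.comp continuous_mul).continuousAt
    have hball : {z : ℂ | ‖z - f g‖ ≤ ε/2} ∈ 𝓝 (f g) := by
      refine Filter.mem_of_superset (Metric.ball_mem_nhds (f g) (half_pos hε)) ?_
      intro z hz
      simp only [Metric.mem_ball, dist_eq_norm] at hz
      exact Set.mem_setOf_eq ▸ le_of_lt hz
    have h2 : (fun p : G × G => f (p.1 * p.2)) ⁻¹' {z : ℂ | ‖z - f g‖ ≤ ε/2} ∈ 𝓝 ((1:G), g) :=
      hc.preimage_mem_nhds (by simpa using hball)
    obtain ⟨U, hU, V, hV, hsub⟩ := mem_nhds_prod_iff.1 h2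
    refine ⟨U, hU, V, hV, fun a ha b hb => ?_⟩
    have h3 := hsub (Set.mk_mem_prod ha hb)
    simpa using h3
  choose U hU V hV hUV using hUV
  have hK : IsCompact (tsupport f) := hfc
  obtain ⟨T, hTK, hTcov⟩ := hK.elim_nhds_subcover (fun g => interior (V g))
      (fun g _ => interior_mem_nhds.2 (hV g))
  set W := ⋃ g ∈ T, interior (V g) with hWdef
  have hWopen : IsOpen W := isOpen_biUnion fun g _ => isOpen_interior
  obtain ⟨U', hU', hU'W⟩ := compact_open_separated_mul_left hK hWopen hTcov
  have hU'inv : U'⁻¹ ∈ 𝓝 (1:G) := by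
    have := (continuous_inv (G := G)).continuousAt (x := (1:G)) |>.preimage_mem_nhds
      (by simpa using hU')
    simpa [Set.inv_preimage] using this
  refine ⟨U'⁻¹ ∩ ⋂ g ∈ T, U g, Filter.inter_mem hU'inv
    ((Filter.biInter_finset_mem _).2 fun g _ => hU g), ?_⟩
  rintro a ⟨haU', haU⟩ g
  by_cases hg : g ∈ W
  · obtain ⟨g₀, hg₀T, hgV⟩ := Set.mem_iUnion₂.1 hg
    have h1 : ‖f (a * g) - f g₀‖ ≤ ε/2 :=
      hUV g₀ a (Set.mem_iInter₂.1 haU g₀ hg₀T) g (interior_subset hgV)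
    have h2 : ‖f g - f g₀‖ ≤ ε/2 := by
      have := hUV g₀ 1 (mem_of_mem_nhds (hU g₀)) g (interior_subset hgV)
      simpa using this
    calc ‖f (a * g) - f g‖ ≤ ‖f (a * g) - f g₀‖ + ‖f g₀ - f g‖ :=
          norm_sub_le_norm_sub_add_norm_sub _ _ _
      _ ≤ ε/2 + ε/2 := add_le_add h1 (by rwa [norm_sub_rev])
      _ = ε := by ring
  · have hfg : f g = 0 := by
      by_contra h
      exact hg (hTcov (subset_tsupport f h))
    have hfag : f (a * g) = 0 := by
      by_contra h
      have hmem : a * g ∈ tsupport f := subset_tsupport f h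
      have : a⁻¹ * (a * g) ∈ W :=
        hU'W (Set.mul_mem_mul (Set.mem_inv.1 haU') hmem)
      simp only [inv_mul_cancel_left] at this
      exact hg this
    simp [hfg, hfag]; positivity

/-- For an extension `1 → A → G → Q → 1` of Lie groups with `A ≅ ℝ` (realized by a
closed embedding `ι : ℝ → G` onto a normal subgroup), if `f ∈ C_c(G)` satisfies
`q₊f = 0`, i.e. `∫_A f(xa) da = 0` for all `x`, then
`γ₊(f)(x) = ∫_{[0,∞)} f(x ι(a)⁻¹) da` and `γ₋(f)(x) = ∫_{(-∞,0]} f(x ι(a)⁻¹) da`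
are compactly supported continuous functions on `G`. -/
theorem gamma_pm_compactly_supported {E G : Type*} [NormedAddCommGroup E]
    [NormedSpace ℝ E] [TopologicalSpace G] [ChartedSpace E G] [Group G]
    [IsTopologicalGroup G] [LieGroup (modelWithCornersSelf ℝ E) (⊤ : ℕ∞) G]
    (ι : ℝ → G) (hιhom : ∀ s t : ℝ, ι (s + t) = ι s * ι t)
    (hιemb : Topology.IsClosedEmbedding ι)
    (hιnorm : ∀ (g : G) (t : ℝ), ∃ s : ℝ, g * ι t * g⁻¹ = ι s)
    (f : G → ℂ) (hf : Continuous f) (hfc : HasCompactSupport f)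
    (hq : ∀ x : G, (∫ t : ℝ, f (x * ι t)) = 0) :
    Continuous (fun x : G => ∫ t in Set.Ici (0 : ℝ), f (x * (ι t)⁻¹)) ∧
    HasCompactSupport (fun x : G => ∫ t in Set.Ici (0 : ℝ), f (x * (ι t)⁻¹)) ∧
    Continuous (fun x : G => ∫ t in Set.Iic (0 : ℝ), f (x * (ι t)⁻¹)) ∧
    HasCompactSupport (fun x : G => ∫ t in Set.Iic (0 : ℝ), f (x * (ι t)⁻¹)) := by
  classical
  have hιc : Continuous ι := hιemb.continuous
  have hι0 : ι 0 = 1 := by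
    have h := hιhom 0 0
    rw [add_zero] at h
    exact mul_eq_left.1 h.symm
  have hιinv : ∀ t : ℝ, (ι t)⁻¹ = ι (-t) := fun t =>
    inv_eq_of_mul_eq_one_right (by rw [← hιhom, add_neg_cancel, hι0])
  have hK : IsCompact (tsupport f) := hfc
  -- continuity and integrability of the integrand
  have hgc : ∀ x : G, Continuous (fun t : ℝ => f (x * (ι t)⁻¹)) :=
    fun x => hf.comp (continuous_const.mul hιc.inv)
  have hgx : ∀ x : G, HasCompactSupport (fun t : ℝ => f (x * (ι t)⁻¹)) := by
    intro x
    have hCc : IsCompact ((fun k : G => k⁻¹ * x) '' tsupport f) :=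
      hK.image (continuous_inv.mul continuous_const)
    refine HasCompactSupport.intro (hιemb.isProperMap.isCompact_preimage hCc) ?_
    intro t ht
    by_contra h
    refine ht (Set.mem_preimage.2 ⟨x * (ι t)⁻¹, subset_tsupport f h, ?_⟩)
    group
  have hgi : ∀ x : G, Integrable (fun t : ℝ => f (x * (ι t)⁻¹)) :=
    fun x => (hgc x).integrable_of_hasCompactSupport (hgx x)
  -- the full-line integral vanishes
  have hq' : ∀ x : G, (∫ t : ℝ, f (x * (ι t)⁻¹)) = 0 := by
    intro x
    calc (∫ t : ℝ, f (x * (ι t)⁻¹)) = ∫ t : ℝ, f (x * ι (-t)) := by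
          simp only [hιinv]
      _ = ∫ t : ℝ, f (x * ι t) := integral_neg_eq_self (fun s : ℝ => f (x * ι s)) volume
      _ = 0 := hq x
  have hsum : ∀ x : G, (∫ t in Set.Iic (0:ℝ), f (x * (ι t)⁻¹))
      + (∫ t in Set.Ici (0:ℝ), f (x * (ι t)⁻¹)) = 0 := by
    intro x
    rw [MeasureTheory.integral_Ici_eq_integral_Ioi,
      intervalIntegral.integral_Iic_add_Ioi (hgi x).integrableOn (hgi x).integrableOn]
    exact hq' x
  have hFneg : (fun x : G => ∫ t in Set.Iic (0:ℝ), f (x * (ι t)⁻¹))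
      = fun x : G => -(∫ t in Set.Ici (0:ℝ), f (x * (ι t)⁻¹)) := by
    funext x
    exact eq_neg_of_add_eq_zero_left (hsum x)
  -- bound on the preimage of (tsupport f)⁻¹ * tsupport f
  have hJ : IsCompact (ι ⁻¹' ((tsupport f)⁻¹ * tsupport f)) :=
    hιemb.isProperMap.isCompact_preimage (hK.inv.mul hK)
  obtain ⟨M, hM⟩ := hJ.isBounded.subset_closedBall 0
  set M₀ : ℝ := max M 0 with hM₀def
  have hM₀0 : 0 ≤ M₀ := le_max_right M 0
  have hM₀ : ∀ t : ℝ, ι t ∈ (tsupport f)⁻¹ * tsupport f → |t| ≤ M₀ := by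
    intro t ht
    have h2 := hM ht
    rw [Metric.mem_closedBall, Real.dist_0_eq_abs] at h2
    exact le_trans h2 (le_max_left M 0)
  -- diameter bound on the support of the integrand
  have hdiam : ∀ y : G, ∀ t s : ℝ, f (y * (ι t)⁻¹) ≠ 0 → f (y * (ι s)⁻¹) ≠ 0 →
      |t - s| ≤ M₀ := by
    intro y t s ht hs
    have hkt : y * (ι t)⁻¹ ∈ tsupport f := subset_tsupport f ht
    have hks : y * (ι s)⁻¹ ∈ tsupport f := subset_tsupport f hs
    refine hM₀ _ ?_
    have heq : ι (t - s) = (y * (ι t)⁻¹)⁻¹ * (y * (ι s)⁻¹) := by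
      rw [sub_eq_add_neg, hιhom, ← hιinv]
      group
    rw [heq]
    exact Set.mul_mem_mul (Set.inv_mem_inv.2 hkt) hks
  -- vanishing of the half-line integrals from pointwise vanishing
  have hIci_zero : ∀ x : G, (∀ t ∈ Set.Ici (0:ℝ), f (x * (ι t)⁻¹) = 0) →
      (∫ t in Set.Ici (0:ℝ), f (x * (ι t)⁻¹)) = 0 := by
    intro x hx
    rw [MeasureTheory.setIntegral_congr_fun measurableSet_Ici
      (fun t ht => hx t ht : Set.EqOn _ (fun _ => (0:ℂ)) _)]
    simp
  -- compact support of γ₊ f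
  have hsuppFp : HasCompactSupport
      (fun x : G => ∫ t in Set.Ici (0:ℝ), f (x * (ι t)⁻¹)) := by
    have hC : IsCompact (tsupport f * (ι '' Set.Icc (-M₀) M₀)) :=
      hK.mul (isCompact_Icc.image hιc)
    refine HasCompactSupport.intro hC ?_
    intro x hx
    by_contra hFx
    have h1 : ∃ t : ℝ, 0 ≤ t ∧ f (x * (ι t)⁻¹) ≠ 0 := by
      by_contra h
      push_neg at h
      exact hFx (hIci_zero x fun t ht => h t ht)
    have h2 : ∃ s : ℝ, s ≤ 0 ∧ f (x * (ι s)⁻¹) ≠ 0 := by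
      by_contra h
      push_neg at h
      have hIic : (∫ t in Set.Iic (0:ℝ), f (x * (ι t)⁻¹)) = 0 := by
        rw [MeasureTheory.setIntegral_congr_fun measurableSet_Iic
          (fun t ht => h t ht : Set.EqOn _ (fun _ => (0:ℂ)) _)]
        simp
      have hs := hsum x
      rw [hIic, zero_add] at hs
      exact hFx hs
    obtain ⟨t, ht0, htne⟩ := h1
    obtain ⟨s, hs0, hsne⟩ := h2
    have htM : |t - s| ≤ M₀ := hdiam x t s htne hsne
    have htle : t ≤ M₀ := by
      have h3 : t - s ≤ |t - s| := le_abs_self _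
      linarith
    refine hFx ?_
    exfalso
    refine hx ?_
    have hmem : (x * (ι t)⁻¹) * ι t ∈ tsupport f * (ι '' Set.Icc (-M₀) M₀) :=
      Set.mul_mem_mul (subset_tsupport f htne)
        (Set.mem_image_of_mem ι ⟨by linarith, htle⟩)
    simpa using hmem
  -- continuity of γ₊ f
  have hcontFp : Continuous
      (fun x : G => ∫ t in Set.Ici (0:ℝ), f (x * (ι t)⁻¹)) := by
    rw [continuous_iff_continuousAt]
    intro x₀
    rw [ContinuousAt, Metric.tendsto_nhds]
    intro ε hε
    set δ : ℝ := ε / (4 * M₀ + 1) with hδdef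
    have hδ : 0 < δ := div_pos hε (by linarith)
    obtain ⟨U, hU, hUf⟩ := aux_unif f hf hfc hδ
    have hnb : {x : G | x * x₀⁻¹ ∈ U} ∈ 𝓝 x₀ := by
      have hcm : ContinuousAt (fun x : G => x * x₀⁻¹) x₀ :=
        (continuous_mul_right _).continuousAt
      have h2 := hcm.preimage_mem_nhds (by simpa using hU)
      exact h2
    filter_upwards [hnb] with x hx
    have hIset : ∀ y : G, ∃ I : Set ℝ, MeasurableSet I ∧
        (∀ t : ℝ, f (y * (ι t)⁻¹) ≠ 0 → t ∈ I) ∧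
        volume I ≤ ENNReal.ofReal (2 * M₀) := by
      intro y
      by_cases hy : ∃ t : ℝ, f (y * (ι t)⁻¹) ≠ 0
      · obtain ⟨t₀, ht₀⟩ := hy
        refine ⟨Set.Icc (t₀ - M₀) (t₀ + M₀), measurableSet_Icc, ?_, ?_⟩
        · intro t ht
          have h3 := hdiam y t t₀ ht ht₀
          rw [abs_le] at h3
          exact ⟨by linarith [h3.1], by linarith [h3.2]⟩
        · rw [Real.volume_Icc]
          exact ENNReal.ofReal_le_ofReal (by linarith)
      · push_neg at hy
        exact ⟨∅, MeasurableSet.empty, fun t ht => absurd (hy t) ht, by simp⟩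
    obtain ⟨I₁, hI₁m, hI₁s, hI₁v⟩ := hIset x
    obtain ⟨I₂, hI₂m, hI₂s, hI₂v⟩ := hIset x₀
    set I : Set ℝ := I₁ ∪ I₂ with hIdef
    have hIm : MeasurableSet I := hI₁m.union hI₂m
    have hIv : volume I ≤ ENNReal.ofReal (4 * M₀) := by
      calc volume I ≤ volume I₁ + volume I₂ := measure_union_le _ _
        _ ≤ ENNReal.ofReal (2*M₀) + ENNReal.ofReal (2*M₀) := add_le_add hI₁v hI₂v
        _ = ENNReal.ofReal (4*M₀) := by
            rw [← ENNReal.ofReal_add (by positivity) (by positivity)]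
            ring_nf
    set D : ℝ → ℂ := fun t => f (x * (ι t)⁻¹) - f (x₀ * (ι t)⁻¹) with hDdef
    have hDle : ∀ t, ‖D t‖ ≤ δ := by
      intro t
      have hxeq : x * (ι t)⁻¹ = (x * x₀⁻¹) * (x₀ * (ι t)⁻¹) := by group
      show ‖f (x * (ι t)⁻¹) - f (x₀ * (ι t)⁻¹)‖ ≤ δ
      rw [hxeq]
      exact hUf (x * x₀⁻¹) hx (x₀ * (ι t)⁻¹)
    have hDsupp : ∀ t, t ∉ I → D t = 0 := by
      intro t ht
      have h1 : f (x * (ι t)⁻¹) = 0 := by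
        by_contra h
        exact ht (Set.mem_union_left _ (hI₁s t h))
      have h2 : f (x₀ * (ι t)⁻¹) = 0 := by
        by_contra h
        exact ht (Set.mem_union_right _ (hI₂s t h))
      show f (x * (ι t)⁻¹) - f (x₀ * (ι t)⁻¹) = 0
      rw [h1, h2, sub_zero]
    have hind : I.indicator D = D :=
      Set.indicator_eq_self.2 (fun t ht => by
        by_contra h
        exact ht (hDsupp t h))
    have hdiff : (∫ t in Set.Ici (0:ℝ), f (x * (ι t)⁻¹))
        - (∫ t in Set.Ici (0:ℝ), f (x₀ * (ι t)⁻¹))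
        = ∫ t in Set.Ici (0:ℝ) ∩ I, D t := by
      rw [← MeasureTheory.integral_sub (hgi x).integrableOn (hgi x₀).integrableOn,
        ← MeasureTheory.setIntegral_indicator hIm, hind]
    have hfin : volume (Set.Ici (0:ℝ) ∩ I) < ⊤ :=
      lt_of_le_of_lt (le_trans (measure_mono Set.inter_subset_right) hIv)
        ENNReal.ofReal_lt_top
    have hmeas : AEStronglyMeasurable D (volume.restrict (Set.Ici (0:ℝ) ∩ I)) :=
      ((hgc x).sub (hgc x₀)).aestronglyMeasurable.restrict
    have hbound := MeasureTheory.norm_setIntegral_le_of_norm_le_const hfin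
      (fun t _ => hDle t)
    have htoReal : (volume (Set.Ici (0:ℝ) ∩ I)).toReal ≤ 4 * M₀ :=
      ENNReal.toReal_le_of_le_ofReal (by positivity)
        (le_trans (measure_mono Set.inter_subset_right) hIv)
    rw [dist_eq_norm, hdiff]
    calc ‖∫ t in Set.Ici (0:ℝ) ∩ I, D t‖
        ≤ δ * (volume (Set.Ici (0:ℝ) ∩ I)).toReal := hbound
      _ ≤ δ * (4 * M₀) := mul_le_mul_of_nonneg_left htoReal hδ.le
      _ < δ * (4 * M₀ + 1) := by nlinarith
      _ = ε := div_mul_cancel₀ ε (by positivity)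
  refine ⟨hcontFp, hsuppFp, ?_, ?_⟩
  · rw [hFneg]
    exact hcontFp.neg
  · rw [hFneg]
    exact hsuppFp.comp_left (g := Neg.neg) neg_zero
end

section
/- Let g ∈ C_c(ℝ) be a nonzero compactly supported continuous function with ∫ g = 0. Then the Fourier transform ĝ (an entire function) has a zero of finite positive order n at χ = 0, and the function G₁(b) = ∫_{−∞}^{b} g(t) dt is compactly supported with Fourier transform having a zero of order exactly n − 1 at 0. -/
open MeasureTheory Set

lemma tsupport_subset_Icc {E : Type*} [NormedAddCommGroup E] {h : ℝ → E}
    (hcs : HasCompactSupport h) : ∃ M : ℝ, 0 < M ∧ tsupport h ⊆ Icc (-M) M := by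
  obtain ⟨r, hr⟩ := hcs.isBounded.subset_closedBall 0
  refine ⟨max r 1, lt_of_lt_of_le one_pos (le_max_right _ _), ?_⟩
  intro x hx
  have := hr hx
  rw [Real.closedBall_eq_Icc] at this
  constructor
  · calc -(max r 1) ≤ -(r) := by simp [neg_le_neg, le_max_left]
    _ ≤ x := by simpa using this.1
  · exact le_trans (by simpa using this.2) (le_max_left _ _)

lemma real_moments_zero (h : ℝ → ℝ) (hc : Continuous h) (hcs : HasCompactSupport h)
    (hm : ∀ k : ℕ, (∫ t : ℝ, h t * t ^ k) = 0) : h = 0 := by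
  obtain ⟨M, hM0, hM⟩ := tsupport_subset_Icc hcs
  obtain ⟨C, hC⟩ := hcs.exists_bound_of_continuous hc
  have hC0 : 0 ≤ C := le_trans (norm_nonneg _) (hC 0)
  -- integral against any polynomial is zero
  have hpoly : ∀ p : Polynomial ℝ, (∫ t : ℝ, h t * p.eval t) = 0 := by
    intro p
    have : (fun t : ℝ => h t * p.eval t)
        = fun t => ∑ i ∈ Finset.range (p.natDegree + 1), (p.coeff i) * (h t * t ^ i) := by
      funext t
      rw [Polynomial.eval_eq_sum_range, Finset.mul_sum]
      congr 1; funext i; ring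
    rw [this, integral_finset_sum]
    · simp only [integral_const_mul, hm, mul_zero, Finset.sum_const_zero]
    · intro i _
      exact (((hc.mul (continuous_pow i)).integrable_of_hasCompactSupport
        (hcs.mul_right)).const_mul _)
  -- ∫ h^2 = 0
  have hsq : (∫ t : ℝ, h t * h t) = 0 := by
    by_contra hne
    set ε : ℝ := |∫ t : ℝ, h t * h t| / ((C + 1) * (2 * M + 1)) with hε
    have hden : 0 < (C + 1) * (2 * M + 1) := by positivity
    have hεpos : 0 < ε := div_pos (abs_pos.2 hne) hden
    obtain ⟨p, hp⟩ := exists_polynomial_near_of_continuousOn (-M) M h hc.continuousOn ε hεpos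
    have key : (∫ t : ℝ, h t * h t) = ∫ t : ℝ, h t * (h t - p.eval t) := by
      have := hpoly p
      rw [show (fun t : ℝ => h t * (h t - p.eval t))
          = fun t => h t * h t - h t * p.eval t by funext t; ring]
      rw [integral_sub, this, sub_zero]
      · exact (hc.mul hc).integrable_of_hasCompactSupport hcs.mul_right
      · exact (hc.mul p.continuous_aeval).integrable_of_hasCompactSupport hcs.mul_right
    have hsub : (∫ t : ℝ, h t * (h t - p.eval t))
        = ∫ t in Icc (-M) M, h t * (h t - p.eval t) := by
      rw [setIntegral_eq_integral_of_forall_compl_eq_zero]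
      intro x hx
      have : h x = 0 := image_eq_zero_of_notMem_tsupport (fun hxx => hx (hM hxx))
      simp [this]
    have hbound : ‖∫ t in Icc (-M) M, h t * (h t - p.eval t)‖ ≤ (C + 1) * ε * (2 * M) := by
      have := norm_setIntegral_le_of_norm_le_const (μ := volume) (s := Icc (-M) M)
        (C := (C + 1) * ε) (f := fun t => h t * (h t - p.eval t))
        (by rw [Real.volume_Icc]; exact ENNReal.ofReal_lt_top)
        (fun x hx => by
          rw [norm_mul]
          have h1 : ‖h x‖ ≤ C + 1 := le_trans (hC x) (by linarith)
          have h2 : ‖h x - p.eval x‖ ≤ ε := by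
            have := hp x hx
            rw [Real.norm_eq_abs, abs_sub_comm]
            exact le_of_lt this
          exact mul_le_mul h1 h2 (norm_nonneg _) (by positivity))
      calc ‖∫ t in Icc (-M) M, h t * (h t - p.eval t)‖
          ≤ (C + 1) * ε * (volume (Icc (-M) M)).toReal := this
        _ = (C + 1) * ε * (2 * M) := by
            rw [Real.volume_Icc]
            congr 1
            rw [ENNReal.toReal_ofReal (by linarith)]
            ring
    have : |∫ t : ℝ, h t * h t| ≤ (C + 1) * ε * (2 * M) := by
      rw [key, hsub]; exact hbound
    have hlt : (C + 1) * ε * (2 * M) < |∫ t : ℝ, h t * h t| := by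
      rw [hε]
      rw [div_eq_inv_mul]
      have : (C + 1) * ((((C + 1) * (2 * M + 1)))⁻¹ * |∫ t : ℝ, h t * h t|) * (2 * M)
          = |∫ t : ℝ, h t * h t| * (((C + 1) * (2 * M)) / ((C + 1) * (2 * M + 1))) := by
        field_simp
      rw [this]
      have hfrac : ((C + 1) * (2 * M)) / ((C + 1) * (2 * M + 1)) < 1 := by
        rw [div_lt_one hden]
        have : 0 < C + 1 := by linarith
        nlinarith
      nlinarith [abs_pos.2 hne]
    linarith
  -- conclude h = 0
  have hnn : 0 ≤ fun t : ℝ => h t * h t := fun t => mul_self_nonneg _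
  have := (integral_eq_zero_iff_of_nonneg hnn
    ((hc.mul hc).integrable_of_hasCompactSupport hcs.mul_right)).mp hsq
  have hae : (fun t : ℝ => h t * h t) = 0 :=
    (Continuous.ae_eq_iff_eq volume (hc.mul hc) continuous_const).mp this
  funext t
  have := congrFun hae t
  simp only [Pi.zero_apply] at this ⊢
  nlinarith [this]

lemma complex_moments_zero (g : ℝ → ℂ) (hc : Continuous g) (hcs : HasCompactSupport g)
    (hm : ∀ k : ℕ, (∫ t : ℝ, g t * (t : ℂ) ^ k) = 0) : g = 0 := by
  have hint : ∀ k : ℕ, Integrable (fun t : ℝ => g t * (t : ℂ) ^ k) := fun k =>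
    (hc.mul (by fun_prop)).integrable_of_hasCompactSupport hcs.mul_right
  have hre : (fun t : ℝ => (g t).re) = 0 := by
    apply real_moments_zero _ (Complex.continuous_re.comp hc)
      (hcs.comp_left (g := Complex.re) rfl)
    intro k
    have h0 := integral_re (hint k)
    rw [hm k] at h0
    rw [show (fun t : ℝ => (Complex.re ∘ g) t * t ^ k)
      = fun t : ℝ => RCLike.re (g t * (t : ℂ) ^ k) by
        funext t; simp [RCLike.re_to_complex, ← Complex.ofReal_pow, Complex.mul_re]]
    simpa using h0
  have him : (fun t : ℝ => (g t).im) = 0 := by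
    apply real_moments_zero _ (Complex.continuous_im.comp hc)
      (hcs.comp_left (g := Complex.im) rfl)
    intro k
    have h0 := integral_im (hint k)
    rw [hm k] at h0
    rw [show (fun t : ℝ => (Complex.im ∘ g) t * t ^ k)
      = fun t : ℝ => RCLike.im (g t * (t : ℂ) ^ k) by
        funext t; simp [RCLike.im_to_complex, ← Complex.ofReal_pow, Complex.mul_im]]
    simpa using h0
  funext t
  have h1 := congrFun hre t
  have h2 := congrFun him t
  simp only [Pi.zero_apply] at h1 h2 ⊢
  exact Complex.ext h1 h2

lemma hasDerivAt_FT (h : ℝ → ℂ) (hc : Continuous h) (hcs : HasCompactSupport h) (z₀ : ℂ) :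
    HasDerivAt (fun z : ℂ => ∫ t : ℝ, h t * Complex.exp (-(Complex.I * z * t)))
      (∫ t : ℝ, (h t * (-(Complex.I * t))) * Complex.exp (-(Complex.I * z₀ * t))) z₀ := by
  obtain ⟨M, hM0, hM⟩ := tsupport_subset_Icc hcs
  set bound : ℝ → ℝ := fun t => ‖h t‖ * (M * Real.exp (M * (‖z₀‖ + 1))) with hbound
  have hF_int : ∀ z : ℂ, Integrable (fun t : ℝ => h t * Complex.exp (-(Complex.I * z * t))) :=
    fun z => (hc.mul (by fun_prop)).integrable_of_hasCompactSupport hcs.mul_right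
  have hderiv : ∀ (z : ℂ) (t : ℝ), HasDerivAt (fun z : ℂ => h t * Complex.exp (-(Complex.I * z * t)))
      ((h t * (-(Complex.I * t))) * Complex.exp (-(Complex.I * z * t))) z := by
    intro z t
    have h1 : HasDerivAt (fun z : ℂ => (-(Complex.I * t)) * z) (-(Complex.I * t)) z := by
      simpa using (hasDerivAt_id z).const_mul (-(Complex.I * (t : ℂ)))
    have h2 := (h1.cexp).const_mul (h t)
    have heq : (fun z : ℂ => h t * Complex.exp (-(Complex.I * (t : ℂ)) * z))
        = fun z : ℂ => h t * Complex.exp (-(Complex.I * z * t)) := by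
      funext z; ring_nf
    rw [heq] at h2
    exact h2.congr_deriv (by ring)
  have hnormexp : ∀ (z : ℂ) (t : ℝ), z ∈ Metric.ball z₀ 1 → t ∈ tsupport h →
      ‖(h t * (-(Complex.I * t))) * Complex.exp (-(Complex.I * z * t))‖ ≤ bound t := by
    intro z t hz ht
    have htM : |t| ≤ M := abs_le.2 ⟨(hM ht).1, (hM ht).2⟩
    have hzn : ‖z‖ ≤ ‖z₀‖ + 1 := by
      have := mem_ball_iff_norm.mp hz
      calc ‖z‖ = ‖z₀ + (z - z₀)‖ := by ring_nf
        _ ≤ ‖z₀‖ + ‖z - z₀‖ := norm_add_le _ _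
        _ ≤ ‖z₀‖ + 1 := by linarith
    simp only [norm_mul, Complex.norm_exp]
    have hre : (-(Complex.I * z * t)).re = z.im * t := by simp [Complex.mul_re]
    rw [hre]
    have h1 : ‖(-(Complex.I * (t : ℂ)))‖ ≤ M := by
      simpa using htM
    have h2 : Real.exp (z.im * t) ≤ Real.exp (M * (‖z₀‖ + 1)) := by
      apply Real.exp_le_exp.2
      calc z.im * t ≤ |z.im * t| := le_abs_self _
        _ = |z.im| * |t| := abs_mul _ _
        _ ≤ (‖z₀‖ + 1) * M := by
            apply mul_le_mul _ htM (abs_nonneg _) (by positivity)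
            exact le_trans (Complex.abs_im_le_norm z) hzn
        _ = M * (‖z₀‖ + 1) := by ring
    rw [hbound]
    calc ‖h t‖ * ‖(-(Complex.I * (t:ℂ)))‖ * Real.exp (z.im * t)
        ≤ ‖h t‖ * M * Real.exp (M * (‖z₀‖ + 1)) := by
          apply mul_le_mul (mul_le_mul le_rfl h1 (by positivity) (by positivity)) h2
            (Real.exp_nonneg _) (by positivity)
      _ = ‖h t‖ * (M * Real.exp (M * (‖z₀‖ + 1))) := by ring
  have := hasDerivAt_integral_of_dominated_loc_of_lip (F := fun (z : ℂ) (t : ℝ) =>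
      h t * Complex.exp (-(Complex.I * z * t)))
      (F' := fun t : ℝ => (h t * (-(Complex.I * t))) * Complex.exp (-(Complex.I * z₀ * t)))
      (x₀ := z₀) (bound := bound) (s := Metric.ball z₀ 1) (Metric.ball_mem_nhds z₀ one_pos)
      (Filter.Eventually.of_forall fun z => ((hc.mul (by fun_prop)).aestronglyMeasurable))
      (hF_int z₀)
      (((hc.mul (by fun_prop)).mul (by fun_prop)).aestronglyMeasurable)
      ?_ ?_ (Filter.Eventually.of_forall fun t => hderiv z₀ t)
  · exact this.2
  · apply Filter.Eventually.of_forall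
    intro t
    by_cases ht : t ∈ tsupport h
    · apply (convex_ball z₀ 1).lipschitzOnWith_of_nnnorm_hasDerivWithin_le
        (f' := fun z => (h t * (-(Complex.I * t))) * Complex.exp (-(Complex.I * z * t)))
        (fun z hz => (hderiv z t).hasDerivWithinAt)
      intro z hz
      have := hnormexp z t hz ht
      rw [← NNReal.coe_le_coe]
      simp only [coe_nnnorm, Real.coe_nnabs]
      exact le_trans this (le_abs_self _)
    · have hzero : h t = 0 := image_eq_zero_of_notMem_tsupport ht
      have : (fun z : ℂ => h t * Complex.exp (-(Complex.I * z * t)))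
          = fun _ : ℂ => (0 : ℂ) := by funext z; simp [hzero]
      rw [this]
      exact (((LipschitzWith.const (0 : ℂ)).weaken zero_le).lipschitzOnWith)
  · exact (hc.norm.integrable_of_hasCompactSupport hcs.norm).mul_const _

lemma iteratedDeriv_FT (g : ℝ → ℂ) (hc : Continuous g) (hcs : HasCompactSupport g) (k : ℕ) :
    iteratedDeriv k (fun z : ℂ => ∫ t : ℝ, g t * Complex.exp (-(Complex.I * z * t))) 0
      = (-Complex.I) ^ k * ∫ t : ℝ, g t * (t : ℂ) ^ k := by
  have main : ∀ k : ℕ, iteratedDeriv k (fun z : ℂ => ∫ t : ℝ, g t * Complex.exp (-(Complex.I * z * t)))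
      = fun z : ℂ => ∫ t : ℝ, (g t * (-(Complex.I * t)) ^ k) * Complex.exp (-(Complex.I * z * t)) := by
    intro k
    induction k with
    | zero => simp [iteratedDeriv_zero]
    | succ k ih =>
      rw [iteratedDeriv_succ, ih]
      funext z
      have hck : Continuous fun t : ℝ => g t * (-(Complex.I * t)) ^ k := by fun_prop
      have hcsk : HasCompactSupport fun t : ℝ => g t * (-(Complex.I * t)) ^ k := hcs.mul_right
      have := (hasDerivAt_FT _ hck hcsk z).deriv
      rw [this]
      congr 1
      funext t
      ring
  rw [main k]
  have : ∀ t : ℝ, (g t * (-(Complex.I * t)) ^ k) * Complex.exp (-(Complex.I * 0 * t))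
      = (-Complex.I) ^ k * (g t * (t : ℂ) ^ k) := by
    intro t
    rw [show -(Complex.I * (0:ℂ) * t) = 0 by ring, Complex.exp_zero,
      show -(Complex.I * (t:ℂ)) = (-Complex.I) * t by ring, mul_pow]
    ring
  simp_rw [this]
  rw [MeasureTheory.integral_const_mul]

lemma primitive_props (g : ℝ → ℂ) (hg : Continuous g) (hgc : HasCompactSupport g)
    (hint : (∫ t : ℝ, g t) = 0) :
    Continuous (fun b : ℝ => ∫ t in Set.Iic b, g t) ∧
    HasCompactSupport (fun b : ℝ => ∫ t in Set.Iic b, g t) ∧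
    (∀ b : ℝ, HasDerivAt (fun b : ℝ => ∫ t in Set.Iic b, g t) (g b) b) := by
  obtain ⟨M, hM0, hM⟩ := tsupport_subset_Icc hgc
  have hgi : Integrable g := hg.integrable_of_hasCompactSupport hgc
  have hzero_left : ∀ b : ℝ, b < -M → (∫ t in Set.Iic b, g t) = 0 := by
    intro b hb
    apply setIntegral_eq_zero_of_forall_eq_zero
    intro x hx
    apply image_eq_zero_of_notMem_tsupport
    intro hxx
    have h1 := (hM hxx).1
    have h2 : x ≤ b := hx
    linarith
  have hzero_right : ∀ b : ℝ, M < b → (∫ t in Set.Iic b, g t) = 0 := by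
    intro b hb
    have hIoi : (∫ t in Set.Ioi b, g t) = 0 := by
      apply setIntegral_eq_zero_of_forall_eq_zero
      intro x hx
      apply image_eq_zero_of_notMem_tsupport
      intro hxx
      have h1 := (hM hxx).2
      have h2 : b < x := hx
      linarith
    have := intervalIntegral.integral_Iic_add_Ioi (b := b) hgi.integrableOn hgi.integrableOn
    rw [hIoi, add_zero, hint] at this
    exact this
  have hderiv : ∀ b : ℝ, HasDerivAt (fun b : ℝ => ∫ t in Set.Iic b, g t) (g b) b := by
    have hfun : (fun b : ℝ => ∫ t in Set.Iic b, g t)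
        = fun b : ℝ => ∫ t in (-(M+1))..b, g t := by
      funext b
      rw [← intervalIntegral.integral_Iic_sub_Iic hgi.integrableOn hgi.integrableOn,
        hzero_left (-(M+1)) (by linarith), sub_zero]
    rw [hfun]
    intro b
    exact intervalIntegral.integral_hasDerivAt_right hgi.intervalIntegrable
      (hg.stronglyMeasurableAtFilter _ _) hg.continuousAt
  refine ⟨?_, ?_, hderiv⟩
  · exact continuous_iff_continuousAt.2 fun b => (hderiv b).continuousAt
  · apply HasCompactSupport.intro (isCompact_Icc (a := -(M+1)) (b := M+1))
    intro b hb
    simp only [mem_Icc, not_and_or, not_le] at hb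
    rcases hb with hb | hb
    · exact hzero_left b (by linarith)
    · exact hzero_right b (by linarith)

lemma ibp_moment (g G : ℝ → ℂ) (hg : Continuous g) (hgc : HasCompactSupport g)
    (hGc : Continuous G) (hGcs : HasCompactSupport G)
    (hGd : ∀ b : ℝ, HasDerivAt G (g b) b) (k : ℕ) :
    (∫ t : ℝ, g t * (t : ℂ) ^ (k + 1)) + ((k : ℂ) + 1) * (∫ t : ℝ, G t * (t : ℂ) ^ k) = 0 := by
  set P : ℝ → ℂ := fun t => G t * (t : ℂ) ^ (k + 1) with hP
  have hpowd : ∀ t : ℝ, HasDerivAt (fun t : ℝ => ((t : ℂ)) ^ (k + 1))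
      (((k : ℂ) + 1) * (t : ℂ) ^ k) t := by
    intro t
    have := (hasDerivAt_pow (k + 1) ((t : ℂ))).comp_ofReal
    simpa using this
  have hPd : ∀ t : ℝ, HasDerivAt P
      (g t * (t : ℂ) ^ (k + 1) + G t * (((k : ℂ) + 1) * (t : ℂ) ^ k)) t := by
    intro t
    exact (hGd t).mul (hpowd t)
  have hPcs : HasCompactSupport P := hGcs.mul_right
  have hP1 : ContDiff ℝ 1 P := by
    have hG1 : ContDiff ℝ 1 G := by
      rw [contDiff_one_iff_deriv]
      constructor
      · exact fun b => (hGd b).differentiableAt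
      · have : deriv G = g := funext fun b => (hGd b).deriv
        rw [this]; exact hg
    have hpow1 : ContDiff ℝ 1 (fun t : ℝ => ((t : ℂ)) ^ (k + 1)) :=
      (Complex.ofRealCLM.contDiff.of_le le_top).pow (k + 1)
    exact hG1.mul hpow1
  have hderivP : deriv P = fun t : ℝ =>
      g t * (t : ℂ) ^ (k + 1) + G t * (((k : ℂ) + 1) * (t : ℂ) ^ k) :=
    funext fun t => (hPd t).deriv
  have h1 : (∫ t in Iic (0:ℝ), deriv P t) = P 0 :=
    HasCompactSupport.integral_Iic_deriv_eq hP1 hPcs 0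
  have h2 : (∫ t in Ioi (0:ℝ), deriv P t) = -P 0 :=
    HasCompactSupport.integral_Ioi_deriv_eq hP1 hPcs 0
  have hderiv_int : Integrable (deriv P) := by
    rw [hderivP]
    apply Integrable.add
    · exact (hg.mul (by fun_prop)).integrable_of_hasCompactSupport hgc.mul_right
    · exact (hGc.mul (by fun_prop)).integrable_of_hasCompactSupport hGcs.mul_right
  have htot : (∫ t : ℝ, deriv P t) = 0 := by
    rw [← intervalIntegral.integral_Iic_add_Ioi hderiv_int.integrableOn hderiv_int.integrableOn,
      h1, h2]
    ring
  rw [hderivP] at htot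
  beta_reduce at htot
  rw [integral_add (f := fun t => g t * (t : ℂ) ^ (k + 1))
    (g := fun t => G t * (((k : ℂ) + 1) * (t : ℂ) ^ k)) ((hg.mul (by fun_prop)).integrable_of_hasCompactSupport hgc.mul_right)
    ((hGc.mul (by fun_prop)).integrable_of_hasCompactSupport hGcs.mul_right)] at htot
  have : (∫ t : ℝ, G t * (((k : ℂ) + 1) * (t : ℂ) ^ k))
      = ((k : ℂ) + 1) * ∫ t : ℝ, G t * (t : ℂ) ^ k := by
    rw [← MeasureTheory.integral_const_mul]
    congr 1; funext t; ring
  rw [this] at htot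
  exact htot

/-- If `g ∈ C_c(ℝ)` is nonzero with `∫ g = 0`, then its Fourier transform (an entire
function) has a zero of finite positive order `n` at `0`, the primitive
`G₁(b) = ∫_{-∞}^b g` is compactly supported, and the Fourier transform of `G₁` has a
zero of order exactly `n - 1` at `0`. -/
theorem fourier_zero_order_drop (g : ℝ → ℂ) (hg : Continuous g)
    (hgc : HasCompactSupport g) (hg0 : g ≠ 0) (hint : (∫ t : ℝ, g t) = 0) :
    ∃ n : ℕ, 0 < n ∧
      (∀ k < n, iteratedDeriv k
        (fun z : ℂ => ∫ t : ℝ, g t * Complex.exp (-(Complex.I * z * t))) 0 = 0) ∧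
      iteratedDeriv n
        (fun z : ℂ => ∫ t : ℝ, g t * Complex.exp (-(Complex.I * z * t))) 0 ≠ 0 ∧
      HasCompactSupport (fun b : ℝ => ∫ t in Set.Iic b, g t) ∧
      (∀ k < n - 1, iteratedDeriv k
        (fun z : ℂ => ∫ t : ℝ, (∫ s in Set.Iic t, g s) *
          Complex.exp (-(Complex.I * z * t))) 0 = 0) ∧
      iteratedDeriv (n - 1)
        (fun z : ℂ => ∫ t : ℝ, (∫ s in Set.Iic t, g s) *
          Complex.exp (-(Complex.I * z * t))) 0 ≠ 0 := by
  have hex : ∃ k : ℕ, (∫ t : ℝ, g t * (t : ℂ) ^ k) ≠ 0 := by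
    by_contra hcon
    push_neg at hcon
    exact hg0 (complex_moments_zero g hg hgc hcon)
  set n := Nat.find hex with hn
  have hnspec : (∫ t : ℝ, g t * (t : ℂ) ^ n) ≠ 0 := Nat.find_spec hex
  have hnmin : ∀ k < n, (∫ t : ℝ, g t * (t : ℂ) ^ k) = 0 := fun k hk =>
    not_not.mp (Nat.find_min hex hk)
  have hnpos : 0 < n := by
    rcases Nat.eq_zero_or_pos n with h0 | h0
    · exfalso
      apply hnspec
      rw [h0]
      simpa using hint
    · exact h0
  obtain ⟨hGc, hGcs, hGd⟩ := primitive_props g hg hgc hint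
  have hrel : ∀ k : ℕ, (∫ t : ℝ, g t * (t : ℂ) ^ (k + 1))
      + ((k : ℂ) + 1) * (∫ t : ℝ, (∫ s in Set.Iic t, g s) * (t : ℂ) ^ k) = 0 :=
    fun k => ibp_moment g _ hg hgc hGc hGcs hGd k
  have hnegI : (-Complex.I : ℂ) ≠ 0 := by
    simp [Complex.I_ne_zero]
  refine ⟨n, hnpos, ?_, ?_, hGcs, ?_, ?_⟩
  · intro k hk
    rw [iteratedDeriv_FT g hg hgc k, hnmin k hk, mul_zero]
  · rw [iteratedDeriv_FT g hg hgc n]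
    exact mul_ne_zero (pow_ne_zero _ hnegI) hnspec
  · intro k hk
    rw [iteratedDeriv_FT _ hGc hGcs k]
    have hk1 : k + 1 < n := by omega
    have := hrel k
    rw [hnmin (k + 1) hk1, zero_add] at this
    have hν : (∫ t : ℝ, (∫ s in Set.Iic t, g s) * (t : ℂ) ^ k) = 0 := by
      have hkne : ((k : ℂ) + 1) ≠ 0 := Nat.cast_add_one_ne_zero k
      exact (mul_eq_zero.mp this).resolve_left hkne
    rw [hν, mul_zero]
  · rw [iteratedDeriv_FT _ hGc hGcs (n - 1)]
    apply mul_ne_zero (pow_ne_zero _ hnegI)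
    intro hν
    have := hrel (n - 1)
    rw [hν, mul_zero, add_zero, show n - 1 + 1 = n by omega] at this
    exact hnspec this
end
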